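/- Let M be a rank-r matroid on ground set {1,…,s} with r ≥ 2, and let p_M(x₁,…,x_s) = Σ_{B basis of M} ∏_{j ∈ B} x_j be its Lagrangian polynomial. For any i ∈ {1,…,s} and any nonnegative reals x₁,…,x_s with Σ_j x_j = 1, the partial derivative satisfies ∂p_M/∂x_i (x₁,…,x_s) ≤ (1 - x_i)^{r-1} · λ(M/i), where λ(M/i) is the Lagrangian (maximum of the Lagrangian polynomial of M/i over the standard simplex). -/

import Mathlib

open Matroid Set Filter

variable {α : Type*}

/-- The number of bases of a matroid. -/
noncomputable def Matroid.numBases (M : Matroid α) : ℕ := {B : Set α | M.IsBase B}.ncard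

/-- Deletion of a set of elements from a matroid. -/
def Matroid.del (M : Matroid α) (D : Set α) : Matroid α := M ↾ (M.E \ D)

/-- Contraction of a set of elements in a matroid, defined by duality. -/
def Matroid.con (M : Matroid α) (C : Set α) : Matroid α := (M✶ ↾ (M✶.E \ C))✶

/-- `N` is a minor of `M`: it is obtained by contracting a set `C` and deleting a set `D`. -/
def Matroid.IsMinorOf (N M : Matroid α) : Prop :=
  ∃ C D : Set α, C ⊆ M.E ∧ D ⊆ M.E ∧ Disjoint C D ∧ N = (M.con C).del D

/-- `M` is (a copy of) the uniform matroid `U_{s,t}`: it has `t` elements and its bases are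
exactly the `s`-element subsets of the ground set. -/
def Matroid.IsUnif (M : Matroid α) (s t : ℕ) : Prop :=
  M.E.Finite ∧ M.E.ncard = t ∧ ∀ B, M.IsBase B ↔ B ⊆ M.E ∧ B.ncard = s

/-- `M` has a minor isomorphic to the uniform matroid `U_{s,t}`. -/
def Matroid.HasUnifMinor (M : Matroid α) (s t : ℕ) : Prop :=
  ∃ N : Matroid α, N.IsMinorOf M ∧ N.IsUnif s t

/-- `M` has a restriction isomorphic to the uniform matroid `U_{s,t}`. -/
def Matroid.HasUnifRestriction (M : Matroid α) (s t : ℕ) : Prop :=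
  ∃ X ⊆ M.E, (M ↾ X).IsUnif s t

/-- `M` has rank `r`. -/
def Matroid.RankEq (M : Matroid α) (r : ℕ) : Prop := ∃ B, M.IsBase B ∧ B.ncard = r

/-- `M` is a simple matroid: every single element and every pair of distinct elements
of the ground set is independent. -/
def Matroid.IsSimple (M : Matroid α) : Prop :=
  (∀ e ∈ M.E, M.Indep {e}) ∧ ∀ e ∈ M.E, ∀ f ∈ M.E, e ≠ f → M.Indep {e, f}

open Classical in
/-- The Lagrangian polynomial of a matroid on ground set `Fin s`. -/
noncomputable def Matroid.lagPoly {s : ℕ} (M : Matroid (Fin s)) (x : Fin s → ℝ) : ℝ :=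
  ∑ B ∈ Finset.univ.filter (fun B : Finset (Fin s) => M.IsBase ↑B), ∏ j ∈ B, x j

/-- The Lagrangian of a matroid on ground set `Fin s`: the supremum of its Lagrangian
polynomial over the standard simplex. -/
noncomputable def Matroid.lag {s : ℕ} (M : Matroid (Fin s)) : ℝ :=
  sSup {y | ∃ x : Fin s → ℝ, (∀ j, 0 ≤ x j) ∧ (∑ j, x j) = 1 ∧ M.lagPoly x = y}


/-- Any value of the Lagrangian polynomial on the simplex is at most the number of subsets. -/
lemma Matroid.lag_bddAbove {s : ℕ} (M : Matroid (Fin s)) :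
    BddAbove {y | ∃ x : Fin s → ℝ, (∀ j, 0 ≤ x j) ∧ (∑ j, x j) = 1 ∧ M.lagPoly x = y} := by
  classical
  refine ⟨((Finset.univ.filter (fun B : Finset (Fin s) => M.IsBase ↑B)).card : ℝ), ?_⟩
  rintro y ⟨x, hx0, hxs, rfl⟩
  rw [Matroid.lagPoly]
  calc ∑ B ∈ Finset.univ.filter (fun B : Finset (Fin s) => M.IsBase ↑B), ∏ j ∈ B, x j
      ≤ ∑ _B ∈ Finset.univ.filter (fun B : Finset (Fin s) => M.IsBase ↑B), (1 : ℝ) := by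
        refine Finset.sum_le_sum fun B _ => ?_
        refine Finset.prod_le_one (fun j _ => hx0 j) (fun j _ => ?_)
        calc x j ≤ ∑ k, x k := Finset.single_le_sum (fun k _ => hx0 k) (Finset.mem_univ j)
        _ = 1 := hxs
    _ = _ := by simp

/-- The Lagrangian is nonnegative (there is at least one simplex point, given one). -/
lemma Matroid.lag_nonneg {s : ℕ} (M : Matroid (Fin s)) (x : Fin s → ℝ)
    (hx : ∀ j, 0 ≤ x j) (hsum : ∑ j, x j = 1) : 0 ≤ M.lag := by
  classical
  have h0 : 0 ≤ M.lagPoly x := by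
    rw [Matroid.lagPoly]
    exact Finset.sum_nonneg fun B _ => Finset.prod_nonneg fun j _ => hx j
  exact h0.trans (le_csSup M.lag_bddAbove ⟨x, hx, hsum, rfl⟩)

/-- Characterization of the bases of the contraction `M / {i}` when `i` lies in some base. -/
lemma Matroid.con_base_iff {s : ℕ} {M : Matroid (Fin s)} (hE : M.E = Set.univ) {i : Fin s}
    {B₀ : Set (Fin s)} (hB₀ : M.IsBase B₀) (hiB₀ : i ∈ B₀) (B : Set (Fin s)) :
    (M.con {i}).IsBase B ↔ i ∉ B ∧ M.IsBase (insert i B) := by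
  have hEd : M✶.E = Set.univ := hE
  have h1 : (M.con {i}).IsBase B ↔
      (M✶ ↾ (M✶.E \ {i})).IsBase ((M✶.E \ {i}) \ B) ∧ B ⊆ (M✶.E \ {i}) := by
    rw [Matroid.con]; exact Matroid.dual_isBase_iff'
  have h2 : ∀ D : Set (Fin s), (M✶ ↾ (M✶.E \ {i})).IsBase D ↔ M✶.IsBasis D (M✶.E \ {i}) :=
    fun D => Matroid.isBase_restrict_iff Set.diff_subset
  have hsetX : (M✶.E \ {i}) \ B = M.E \ insert i B := by
    rw [Set.diff_diff, Set.singleton_union]; rfl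
  rw [h1, h2]
  constructor
  · rintro ⟨hb, hBX⟩
    have hD₀ : M✶.IsBase (M.E \ B₀) := hB₀.compl_isBase_dual
    have hD₀X : (M.E \ B₀ : Set (Fin s)) ⊆ M✶.E \ {i} :=
      Set.diff_subset_diff_right (Set.singleton_subset_iff.mpr hiB₀)
    have hbase : M✶.IsBase ((M✶.E \ {i}) \ B) := hb.isBase_of_isBase_subset hD₀ hD₀X
    rw [hsetX, Matroid.dual_isBase_iff (by exact Set.diff_subset)] at hbase
    rw [Set.diff_diff_cancel_left (by rw [hE]; exact Set.subset_univ _)] at hbase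
    exact ⟨fun h => (hBX h).2 rfl, hbase⟩
  · rintro ⟨hiB, hBase⟩
    have hBX : B ⊆ M✶.E \ {i} := by
      rw [hEd]; exact Set.subset_diff_singleton (Set.subset_univ B) hiB
    have hbase : M✶.IsBase ((M✶.E \ {i}) \ B) := by
      rw [hsetX]; exact hBase.compl_isBase_dual
    exact ⟨hbase.isBasis_of_subset Set.diff_subset Set.diff_subset, hBX⟩

/-- The partial derivative of the Lagrangian polynomial of a rank-`r` matroid at a point of
the standard simplex is at most `(1 - xᵢ)^(r-1)` times the Lagrangian of the contraction. -/
theorem lagrangian_gradient_bound {s : ℕ} (r : ℕ) (hr : 2 ≤ r) (M : Matroid (Fin s))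
    (hE : M.E = Set.univ) (hrank : M.RankEq r) (i : Fin s)
    (x : Fin s → ℝ) (hx : ∀ j, 0 ≤ x j) (hsum : ∑ j, x j = 1) :
    deriv (fun y => M.lagPoly (Function.update x i y)) (x i) ≤
      (1 - x i) ^ (r - 1) * (M.con {i}).lag := by
  classical
  set a : ℝ := ∑ B ∈ Finset.univ.filter (fun B : Finset (Fin s) => M.IsBase ↑B ∧ i ∈ B),
      ∏ j ∈ B.erase i, x j with ha_def
  set b : ℝ := ∑ B ∈ Finset.univ.filter (fun B : Finset (Fin s) => M.IsBase ↑B ∧ i ∉ B),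
      ∏ j ∈ B, x j with hb_def
  -- Step 1 : the function of y is affine, y ↦ a * y + b.
  have hfun : (fun y => M.lagPoly (Function.update x i y)) = fun y => a * y + b := by
    funext y
    rw [Matroid.lagPoly,
      ← Finset.sum_filter_add_sum_filter_not
        (Finset.univ.filter (fun B : Finset (Fin s) => M.IsBase ↑B)) (fun B => i ∈ B),
      Finset.filter_filter, Finset.filter_filter]
    congr 1
    · rw [ha_def, Finset.sum_mul]
      refine Finset.sum_congr rfl fun B hB => ?_
      have hiB : i ∈ B := (Finset.mem_filter.mp hB).2.2
      rw [← Finset.prod_erase_mul _ _ hiB, Function.update_self]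
      congr 1
      refine Finset.prod_congr rfl fun j hj => ?_
      exact Function.update_of_ne (Finset.ne_of_mem_erase hj) _ _
    · rw [hb_def]
      refine Finset.sum_congr rfl fun B hB => Finset.prod_congr rfl fun j hj => ?_
      have hiB : i ∉ B := (Finset.mem_filter.mp hB).2.2
      exact Function.update_of_ne (by rintro rfl; exact hiB hj) _ _
  have hderiv : deriv (fun y => M.lagPoly (Function.update x i y)) (x i) = a := by
    rw [hfun]
    have : HasDerivAt (fun y : ℝ => a * y + b) a (x i) := by
      simpa using (((hasDerivAt_id (x i)).const_mul a).add_const b)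
    exact this.deriv
  rw [hderiv]
  have hx1 : x i ≤ 1 := by
    rw [← hsum]; exact Finset.single_le_sum (fun k _ => hx k) (Finset.mem_univ i)
  by_cases hex : ∃ B₀ : Set (Fin s), M.IsBase B₀ ∧ i ∈ B₀
  · obtain ⟨B₀, hB₀, hiB₀⟩ := hex
    have hchar := Matroid.con_base_iff hE hB₀ hiB₀
    obtain ⟨Br, hBr, hBrcard⟩ := hrank
    have hcard : ∀ B : Finset (Fin s), M.IsBase ↑B → B.card = r := by
      intro B hB
      have h := hB.ncard_eq_ncard_of_isBase hBr
      rwa [Set.ncard_coe_finset, hBrcard] at h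
    rcases eq_or_lt_of_le hx1 with h1 | h1
    · -- x i = 1 : both sides are zero
      have hzero : ∀ j, j ≠ i → x j = 0 := by
        intro j hj
        have hsum' : ∑ k ∈ Finset.univ.erase i, x k = 0 := by
          have := Finset.add_sum_erase Finset.univ x (Finset.mem_univ i)
          rw [hsum, ← h1] at this
          linarith
        have := (Finset.sum_eq_zero_iff_of_nonneg
          (fun k _ => hx k)).mp hsum' j (Finset.mem_erase.mpr ⟨hj, Finset.mem_univ j⟩)
        exact this
      have ha : a = 0 := by
        rw [ha_def]
        refine Finset.sum_eq_zero fun B hB => ?_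
        obtain ⟨hBbase, hiB⟩ := (Finset.mem_filter.mp hB).2
        have hcardB : B.card = r := hcard B hBbase
        have hne : (B.erase i).Nonempty := by
          rw [← Finset.card_pos, Finset.card_erase_of_mem hiB, hcardB]
          omega
        obtain ⟨j, hj⟩ := hne
        exact Finset.prod_eq_zero hj (hzero j (Finset.ne_of_mem_erase hj))
      rw [ha, h1, show (1:ℝ) - 1 = 0 by ring, zero_pow (by omega : r - 1 ≠ 0), zero_mul]
    · -- x i < 1
      set c : ℝ := 1 - x i with hc
      have hcpos : 0 < c := by rw [hc]; linarith
      set z : Fin s → ℝ := fun j => if j = i then 0 else x j / c with hz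
      have hz0 : ∀ j, 0 ≤ z j := by
        intro j; rw [hz]; dsimp only
        split
        · exact le_refl 0
        · exact div_nonneg (hx j) hcpos.le
      have hzsum : ∑ j, z j = 1 := by
        rw [← Finset.add_sum_erase Finset.univ z (Finset.mem_univ i)]
        have h1' : z i = 0 := by rw [hz]; simp
        have h2' : ∑ k ∈ Finset.univ.erase i, z k = (∑ k ∈ Finset.univ.erase i, x k) / c := by
          rw [Finset.sum_div]
          refine Finset.sum_congr rfl fun k hk => ?_
          rw [hz]; dsimp only
          rw [if_neg (Finset.mem_erase.mp hk).1]
        have h3' : ∑ k ∈ Finset.univ.erase i, x k = c := by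
          have := Finset.add_sum_erase Finset.univ x (Finset.mem_univ i)
          rw [hsum] at this
          rw [hc]; linarith
        rw [h1', h2', h3', zero_add, div_self hcpos.ne']
      have hbij : a = c ^ (r - 1) * (M.con {i}).lagPoly z := by
        rw [Matroid.lagPoly, Finset.mul_sum, ha_def]
        refine Finset.sum_nbij' (fun B => B.erase i) (fun B' => insert i B') ?_ ?_ ?_ ?_ ?_
        · intro B hB
          obtain ⟨hBbase, hiB⟩ := (Finset.mem_filter.mp hB).2
          simp only [Finset.mem_filter, Finset.mem_univ, true_and]
          rw [hchar]
          refine ⟨by simp, ?_⟩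
          rw [Finset.coe_erase, Set.insert_diff_singleton,
            Set.insert_eq_self.mpr (Finset.mem_coe.mpr hiB)]
          exact hBbase
        · intro B' hB'
          have hbase' := (Finset.mem_filter.mp hB').2
          rw [hchar] at hbase'
          obtain ⟨hiB', hBins⟩ := hbase'
          simp only [Finset.mem_filter, Finset.mem_univ, true_and]
          rw [Finset.coe_insert]
          exact ⟨hBins, Finset.mem_insert_self i B'⟩
        · intro B hB
          exact Finset.insert_erase (Finset.mem_filter.mp hB).2.2
        · intro B' hB'
          have hbase' := (Finset.mem_filter.mp hB').2
          rw [hchar] at hbase'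
          exact Finset.erase_insert (fun h => hbase'.1 h)
        · intro B hB
          obtain ⟨hBbase, hiB⟩ := (Finset.mem_filter.mp hB).2
          have hcardE : (B.erase i).card = r - 1 := by
            rw [Finset.card_erase_of_mem hiB, hcard B hBbase]
          have : ∀ j ∈ B.erase i, x j = c * z j := by
            intro j hj
            rw [hz]; dsimp only
            rw [if_neg (Finset.ne_of_mem_erase hj)]
            field_simp
          rw [Finset.prod_congr rfl this, Finset.prod_mul_distrib, Finset.prod_const, hcardE]
      rw [hbij]
      refine mul_le_mul_of_nonneg_left ?_ (pow_nonneg hcpos.le _)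
      exact le_csSup (M.con {i}).lag_bddAbove ⟨z, hz0, hzsum, rfl⟩
  · -- no base contains i : the derivative is zero
    have ha : a = 0 := by
      rw [ha_def]
      refine Finset.sum_eq_zero fun B hB => ?_
      obtain ⟨hBbase, hiB⟩ := (Finset.mem_filter.mp hB).2
      exact absurd ⟨(B : Set (Fin s)), hBbase, hiB⟩ hex
    rw [ha]
    exact mul_nonneg (pow_nonneg (by linarith) _) ((M.con {i}).lag_nonneg x hx hsum)
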